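/- arXiv:2012.13710 — 3 statements merged into one kernel-verified Lean document; each statement's English description precedes it below -/
import Mathlib

section
/- Let $\phi$ be a bounded probability density function on $\mathbb{R}$ with cdf $\Phi$, let $G$ be a symmetric adjacency matrix on $n$ nodes with no self-links and each node having at least one neighbor, and let $t_i \in \mathbb{R}$ and $\theta_3 \in \mathbb{R}$ be given. If $\lambda = |\theta_3| \sup_u \phi(u) < 1$, then there is at most one vector $\sigma \in [0,1]^n$ satisfying $\sigma_i = \Phi\big(t_i + \theta_3 \frac{1}{|\mathcal{N}_i|} \sum_{j \in \mathcal{N}_i} \sigma_j\big)$ for all $i$. -/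
open MeasureTheory Set

/-- Uniqueness of the Bayes-Nash equilibrium of the treatment
choice game when `λ = |θ₃| · sup φ < 1`. -/
theorem unique_equilibrium
    (n : ℕ) (G : Fin n → Fin n → Bool)
    (hGsym : ∀ i j, G i j = G j i)
    (hGirr : ∀ i, G i i = false)
    (N : Fin n → Finset (Fin n))
    (hN : ∀ i, N i = Finset.univ.filter (fun j => G i j = true))
    (hNne : ∀ i, (N i).Nonempty)
    (φ : ℝ → ℝ)
    (hφ0 : ∀ u, 0 ≤ φ u)
    (hφint : Integrable φ)
    (hφ1 : (∫ u, φ u) = 1)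
    (hφbdd : BddAbove (Set.range φ))
    (Φ : ℝ → ℝ) (hΦ : ∀ x, Φ x = ∫ u in Set.Iic x, φ u)
    (t : Fin n → ℝ) (θ3 : ℝ)
    (hlam : |θ3| * (⨆ u, φ u) < 1)
    (σ τ : Fin n → ℝ)
    (hσ01 : ∀ i, σ i ∈ Set.Icc (0:ℝ) 1)
    (hτ01 : ∀ i, τ i ∈ Set.Icc (0:ℝ) 1)
    (hσ : ∀ i, σ i = Φ (t i + θ3 * (((N i).sum σ) / ((N i).card : ℝ))))
    (hτ : ∀ i, τ i = Φ (t i + θ3 * (((N i).sum τ) / ((N i).card : ℝ)))) :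
    σ = τ := by
  set C : ℝ := ⨆ u, φ u with hC
  have hC0 : 0 ≤ C := le_trans (hφ0 0) (le_ciSup hφbdd 0)
  have hφC : ∀ u, φ u ≤ C := fun u => le_ciSup hφbdd u
  -- Lipschitz property of Φ
  have lip : ∀ a b : ℝ, |Φ a - Φ b| ≤ C * |a - b| := by
    have key : ∀ a b : ℝ, a ≤ b → |Φ b - Φ a| ≤ C * |b - a| := by
      intro a b hab
      rw [hΦ a, hΦ b, intervalIntegral.integral_Iic_sub_Iic (hφint.integrableOn) (hφint.integrableOn),
        intervalIntegral.integral_of_le hab]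
      calc |∫ u in Ioc a b, φ u| ≤ C * (volume (Ioc a b)).toReal := by
            rw [← Real.norm_eq_abs]
            refine norm_setIntegral_le_of_norm_le_const measure_Ioc_lt_top (fun x _ => ?_)
            rw [Real.norm_eq_abs, abs_of_nonneg (hφ0 x)]
            exact hφC x
        _ = C * |b - a| := by
            rw [Real.volume_Ioc, ENNReal.toReal_ofReal (by linarith), abs_of_nonneg (by linarith)]
    intro a b
    rcases le_total a b with h | h
    · rw [abs_sub_comm, abs_sub_comm a b]; exact key a b h
    · exact key b a h
  rcases Nat.eq_zero_or_pos n with hn | hn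
  · subst hn; funext i; exact i.elim0
  have hne : (Finset.univ : Finset (Fin n)).Nonempty := by
    simpa [Finset.univ_nonempty_iff] using Fin.pos_iff_nonempty.mp hn
  set M : ℝ := Finset.univ.sup' hne (fun i => |σ i - τ i|) with hM
  have hM0 : 0 ≤ M := le_trans (abs_nonneg _) (Finset.le_sup' (fun i => |σ i - τ i|) (Finset.mem_univ hne.choose))
  have hstep : ∀ i, |σ i - τ i| ≤ (|θ3| * C) * M := by
    intro i
    have hcard : (0:ℝ) < ((N i).card : ℝ) := by
      exact_mod_cast Finset.card_pos.mpr (hNne i)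
    have hsum : |(N i).sum σ - (N i).sum τ| ≤ ((N i).card : ℝ) * M := by
      rw [← Finset.sum_sub_distrib]
      calc |∑ j ∈ N i, (σ j - τ j)| ≤ ∑ j ∈ N i, |σ j - τ j| :=
            Finset.abs_sum_le_sum_abs _ _
        _ ≤ ∑ j ∈ N i, M :=
            Finset.sum_le_sum (fun j _ => Finset.le_sup' (fun k => |σ k - τ k|) (Finset.mem_univ j))
        _ = ((N i).card : ℝ) * M := by rw [Finset.sum_const, nsmul_eq_mul]
    calc |σ i - τ i|
        = |Φ (t i + θ3 * ((N i).sum σ / ((N i).card:ℝ)))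
           - Φ (t i + θ3 * ((N i).sum τ / ((N i).card:ℝ)))| := by rw [hσ i, hτ i]
      _ ≤ C * |(t i + θ3 * ((N i).sum σ / ((N i).card:ℝ)))
           - (t i + θ3 * ((N i).sum τ / ((N i).card:ℝ)))| := lip _ _
      _ = C * (|θ3| * (|(N i).sum σ - (N i).sum τ| / ((N i).card:ℝ))) := by
            rw [show (t i + θ3 * ((N i).sum σ / ((N i).card:ℝ)))
               - (t i + θ3 * ((N i).sum τ / ((N i).card:ℝ)))
               = θ3 * (((N i).sum σ - (N i).sum τ) / ((N i).card:ℝ)) by ring,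
              abs_mul, abs_div, abs_of_pos hcard]
      _ ≤ C * (|θ3| * M) := by
            have : |(N i).sum σ - (N i).sum τ| / ((N i).card:ℝ) ≤ M := by
              rw [div_le_iff₀ hcard]; linarith [hsum]
            have h1 : |θ3| * (|(N i).sum σ - (N i).sum τ| / ((N i).card:ℝ)) ≤ |θ3| * M :=
              mul_le_mul_of_nonneg_left this (abs_nonneg _)
            exact mul_le_mul_of_nonneg_left h1 hC0
      _ = (|θ3| * C) * M := by ring
  have hMle : M ≤ (|θ3| * C) * M := Finset.sup'_le _ _ (fun i _ => hstep i)
  have hM0' : M = 0 := by nlinarith [hM0, hMle, hlam]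
  funext i
  have : |σ i - τ i| ≤ 0 := hM0' ▸ Finset.le_sup' (fun i => |σ i - τ i|) (Finset.mem_univ i)
  have := abs_nonneg (σ i - τ i)
  linarith [abs_le.mp (le_antisymm ‹|σ i - τ i| ≤ 0› this ▸ le_refl (0:ℝ))]
end

section
/- Under the hypotheses of the uniqueness theorem (in particular $\lambda = |\theta_3|\sup_u \phi(u) < 1$), the best-response map $T : [0,1]^n \to [0,1]^n$ defined by $T(\sigma)_i = \Phi\big(t_i + \theta_3 \frac{1}{|\mathcal{N}_i|}\sum_{j \in \mathcal{N}_i}\sigma_j\big)$ is a contraction with respect to the sup norm $\|\sigma\|_\infty = \max_i |\sigma_i|$, with Lipschitz constant at most $\lambda$. -/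
open MeasureTheory Set

/-- The best-response map is a sup-norm contraction with
Lipschitz constant at most `λ = |θ₃| · sup φ`. -/
theorem best_response_contraction
    (n : ℕ) (G : Fin n → Fin n → Bool)
    (hGsym : ∀ i j, G i j = G j i)
    (hGirr : ∀ i, G i i = false)
    (N : Fin n → Finset (Fin n))
    (hN : ∀ i, N i = Finset.univ.filter (fun j => G i j = true))
    (hNne : ∀ i, (N i).Nonempty)
    (φ : ℝ → ℝ)
    (hφ0 : ∀ u, 0 ≤ φ u)
    (hφint : Integrable φ)
    (hφ1 : (∫ u, φ u) = 1)
    (hφbdd : BddAbove (Set.range φ))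
    (Φ : ℝ → ℝ) (hΦ : ∀ x, Φ x = ∫ u in Set.Iic x, φ u)
    (t : Fin n → ℝ) (θ3 : ℝ)
    (hlam : |θ3| * (⨆ u, φ u) < 1)
    (T : (Fin n → ℝ) → (Fin n → ℝ))
    (hT : ∀ σ i, T σ i = Φ (t i + θ3 * (((N i).sum σ) / ((N i).card : ℝ)))) :
    ∀ σ τ : Fin n → ℝ, (∀ i, σ i ∈ Set.Icc (0:ℝ) 1) → (∀ i, τ i ∈ Set.Icc (0:ℝ) 1) →
      ‖T σ - T τ‖ ≤ (|θ3| * (⨆ u, φ u)) * ‖σ - τ‖ := by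
  intro σ τ _ _
  set M := ⨆ u, φ u with hM
  have hφM : ∀ u, φ u ≤ M := fun u => le_ciSup hφbdd u
  have hMnn : 0 ≤ M := le_trans (hφ0 0) (hφM 0)
  have hΦlip : ∀ x y : ℝ, |Φ x - Φ y| ≤ M * |x - y| := by
    intro x y
    have h : Φ x - Φ y = ∫ u in y..x, φ u := by
      rw [hΦ, hΦ,
        intervalIntegral.integral_Iic_sub_Iic hφint.integrableOn hφint.integrableOn]
    rw [h]
    have := intervalIntegral.norm_integral_le_of_norm_le_const
      (C := M) (f := φ) (a := y) (b := x) (fun u _ => by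
        rw [Real.norm_eq_abs, abs_of_nonneg (hφ0 u)]; exact hφM u)
    simpa [Real.norm_eq_abs, abs_sub_comm x y] using this
  have key : ∀ i, |T σ i - T τ i| ≤ |θ3| * M * ‖σ - τ‖ := by
    intro i
    have hc : (0:ℝ) < (N i).card := by
      exact_mod_cast Finset.card_pos.mpr (hNne i)
    have havg : |(N i).sum σ / ((N i).card : ℝ) - (N i).sum τ / ((N i).card : ℝ)| ≤ ‖σ - τ‖ := by
      rw [div_sub_div_same, abs_div, abs_of_pos hc, div_le_iff₀ hc]
      calc |∑ j ∈ N i, σ j - ∑ j ∈ N i, τ j| = |∑ j ∈ N i, (σ j - τ j)| := by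
            rw [Finset.sum_sub_distrib]
        _ ≤ ∑ j ∈ N i, |σ j - τ j| := Finset.abs_sum_le_sum_abs _ _
        _ ≤ ∑ j ∈ N i, ‖σ - τ‖ := Finset.sum_le_sum (fun j _ => by
            simpa using norm_le_pi_norm (σ - τ) j)
        _ = (N i).card * ‖σ - τ‖ := by rw [Finset.sum_const, nsmul_eq_mul]
        _ = ‖σ - τ‖ * (N i).card := mul_comm _ _
    rw [hT, hT]
    calc |Φ (t i + θ3 * ((N i).sum σ / ((N i).card : ℝ))) -
            Φ (t i + θ3 * ((N i).sum τ / ((N i).card : ℝ)))|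
        ≤ M * |(t i + θ3 * ((N i).sum σ / ((N i).card : ℝ))) -
            (t i + θ3 * ((N i).sum τ / ((N i).card : ℝ)))| := hΦlip _ _
      _ = M * (|θ3| * |(N i).sum σ / ((N i).card : ℝ) - (N i).sum τ / ((N i).card : ℝ)|) := by
          rw [add_sub_add_left_eq_sub, ← mul_sub, abs_mul]
      _ ≤ M * (|θ3| * ‖σ - τ‖) := by
          apply mul_le_mul_of_nonneg_left _ hMnn
          exact mul_le_mul_of_nonneg_left havg (abs_nonneg _)
      _ = |θ3| * M * ‖σ - τ‖ := by ring
  rw [pi_norm_le_iff_of_nonneg (by positivity)]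
  intro i
  simpa [Real.norm_eq_abs] using key i
end

section
/- Suppose equilibrium choice probabilities at parameters $\theta$ and $\theta^0$ coincide: $\sigma_i^*(S,\theta) = \sigma_i^*(S,\theta^0)$ for all $i \in \{1,\ldots,n\}$, where each satisfies its fixed-point equation $\Phi^{-1}(\sigma_i^*(S,\vartheta)) = X_i'\vartheta_1 + \vartheta_2 Z_i + \vartheta_3 \frac{1}{|\mathcal{N}_i|}\sum_{j\in\mathcal{N}_i}\sigma_j^*(S,\vartheta)$ for $\vartheta \in \{\theta, \theta^0\}$, with $\Phi$ strictly increasing. If the matrix $\sum_{i=1}^n R_i R_i'$ with $R_i = (X_i', Z_i, \frac{1}{|\mathcal{N}_i|}\sum_{j\in\mathcal{N}_i}\sigma_j^*(S,\theta^0))'$ is positive definite, then $\theta = \theta^0$. -/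
/-- Observational equivalence of equilibrium choice probabilities
at two parameter values, together with positive definiteness of the moment
matrix of `Rᵢ = (Xᵢ', Zᵢ, πᵢ*(S,θ⁰))'`, forces the parameters to coincide. -/
theorem observational_equivalence_identification
    (n k : ℕ) (G : Fin n → Fin n → Bool)
    (hGsym : ∀ i j, G i j = G j i)
    (hGirr : ∀ i, G i i = false)
    (N : Fin n → Finset (Fin n))
    (hN : ∀ i, N i = Finset.univ.filter (fun j => G i j = true))
    (hNne : ∀ i, (N i).Nonempty)
    (Φ : ℝ → ℝ) (hΦmono : StrictMono Φ)
    (X : Fin n → (Fin k → ℝ)) (Z : Fin n → ℝ) (hZ : ∀ i, Z i = 0 ∨ Z i = 1)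
    (θ1 θ01 : Fin k → ℝ) (θ2 θ3 θ02 θ03 : ℝ)
    (s s0 : Fin n → ℝ)
    (hfix : ∀ i, s i
      = Φ ((∑ a, X i a * θ1 a) + θ2 * Z i + θ3 * (((N i).sum s) / ((N i).card : ℝ))))
    (hfix0 : ∀ i, s0 i
      = Φ ((∑ a, X i a * θ01 a) + θ02 * Z i + θ03 * (((N i).sum s0) / ((N i).card : ℝ))))
    (heq : ∀ i, s i = s0 i)
    (hpd : ∀ (v1 : Fin k → ℝ) (v2 v3 : ℝ), (v1 ≠ 0 ∨ v2 ≠ 0 ∨ v3 ≠ 0) →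
      0 < ∑ i, ((∑ a, X i a * v1 a) + Z i * v2
        + (((N i).sum s0) / ((N i).card : ℝ)) * v3) ^ 2) :
    θ1 = θ01 ∧ θ2 = θ02 ∧ θ3 = θ03 := by
  have hs : s = s0 := funext heq
  subst hs
  -- each index has equal linear indices
  have hind : ∀ i, (∑ a, X i a * θ1 a) + θ2 * Z i + θ3 * (((N i).sum s) / ((N i).card : ℝ))
      = (∑ a, X i a * θ01 a) + θ02 * Z i + θ03 * (((N i).sum s) / ((N i).card : ℝ)) := by
    intro i
    have := (hfix i).symm.trans (hfix0 i)
    exact hΦmono.injective this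
  set v1 : Fin k → ℝ := fun a => θ1 a - θ01 a with hv1
  set v2 := θ2 - θ02 with hv2
  set v3 := θ3 - θ03 with hv3
  have hzero : ∀ i, (∑ a, X i a * v1 a) + Z i * v2
      + (((N i).sum s) / ((N i).card : ℝ)) * v3 = 0 := by
    intro i
    have h := hind i
    simp only [hv1, hv2, hv3, mul_sub]
    rw [Finset.sum_sub_distrib]
    ring_nf
    ring_nf at h
    linarith
  have hsumzero : (∑ i, ((∑ a, X i a * v1 a) + Z i * v2
      + (((N i).sum s) / ((N i).card : ℝ)) * v3) ^ 2) = 0 := by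
    apply Finset.sum_eq_zero
    intro i _
    rw [hzero i]; ring
  have hall : v1 = 0 ∧ v2 = 0 ∧ v3 = 0 := by
    by_contra hc
    push_neg at hc
    have : v1 ≠ 0 ∨ v2 ≠ 0 ∨ v3 ≠ 0 := by tauto
    have := hpd v1 v2 v3 this
    rw [hsumzero] at this
    exact lt_irrefl 0 this
  obtain ⟨h1, h2, h3⟩ := hall
  refine ⟨funext fun a => ?_, by linarith [congrArg id h2, sub_eq_zero.mp h2], sub_eq_zero.mp h3⟩
  have := congrFun h1 a
  simpa [hv1, sub_eq_zero] using this
end
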